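/- Let x : (Fin k → ℤ) → ℤ[T,T⁻¹] satisfy the Jones recurrence in each coordinate: for every i : Fin k and every A : Fin k → ℤ, x(A[i ↦ A i + 2]) = (T³ − T)·x(A[i ↦ A i + 1]) + T⁴·x(A). For a : ℤ define the Laurent polynomials P₀(a) = T^(3a) + ε(a)·T^(a+2) and P₁(a) = T^(3a−1) + (−ε(a))·T^(a−1), where ε(a) = 1 if a is even and ε(a) = −1 if a is odd. Then for every A : Fin k → ℤ, (1 + T²)^k · x(A) = ∑ over all J : Fin k → Fin 2 of (∏ i, P_{J i}(A i)) · x(J), where in x(J) the function J is viewed as taking values 0 and 1 in ℤ. -/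

import Mathlib

open LaurentPolynomial

private noncomputable def q0 (a : ℤ) : LaurentPolynomial ℤ :=
  T (3 * a) + (if Even a then 1 else -1) * T (a + 2)
private noncomputable def q1 (a : ℤ) : LaurentPolynomial ℤ :=
  T (3 * a - 1) + (if Even a then -1 else 1) * T (a - 1)

private lemma texp (b : ℤ) (c : ℕ) : (T (b + c) : LaurentPolynomial ℤ) = T b * T 1 ^ c := by
  rw [T_add, T_pow, mul_one]

private lemma tlit (c : ℕ) : (T (c : ℤ) : LaurentPolynomial ℤ) = T 1 ^ c := by
  rw [T_pow, mul_one]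

private lemma E2 {a : ℤ} (h : Even a) : Even (a + 2) := by simpa [Int.even_add]
private lemma nE2 {a : ℤ} (h : ¬ Even a) : ¬ Even (a + 2) := by simp [Int.even_add, h]
private lemma E1 {a : ℤ} (h : ¬ Even a) : Even (a + 1) := Int.even_add_one.mpr h
private lemma nE1 {a : ℤ} (h : Even a) : ¬ Even (a + 1) := by simp [Int.even_add_one, h]

private lemma q0_rec (a : ℤ) :
    q0 (a + 2) = (T 3 - T 1) * q0 (a + 1) + T 4 * q0 a := by
  rcases em (Even a) with h | h <;>
  [rw [q0, q0, q0, if_pos (E2 h), if_neg (nE1 h), if_pos h];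
   rw [q0, q0, q0, if_neg (nE2 h), if_pos (E1 h), if_neg h]] <;>
  rw [show 3*(a+2) = 3*a + ((6:ℕ):ℤ) by push_cast; ring,
    show (a+2)+2 = a + ((4:ℕ):ℤ) by push_cast; ring,
    show 3*(a+1) = 3*a + ((3:ℕ):ℤ) by push_cast; ring,
    show (a+1)+2 = a + ((3:ℕ):ℤ) by push_cast; ring,
    show a+2 = a + ((2:ℕ):ℤ) by push_cast; ring,
    texp, texp, texp, texp, texp,
    show (3:ℤ) = ((3:ℕ):ℤ) by norm_num, show (4:ℤ) = ((4:ℕ):ℤ) by norm_num,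
    show (1:ℤ) = ((1:ℕ):ℤ) by norm_num, tlit, tlit, tlit] <;> ring

private lemma q1_rec (a : ℤ) :
    q1 (a + 2) = (T 3 - T 1) * q1 (a + 1) + T 4 * q1 a := by
  rcases em (Even a) with h | h <;>
  [rw [q1, q1, q1, if_pos (E2 h), if_neg (nE1 h), if_pos h];
   rw [q1, q1, q1, if_neg (nE2 h), if_pos (E1 h), if_neg h]] <;>
  rw [show 3*(a+2)-1 = (3*a-1) + ((6:ℕ):ℤ) by push_cast; ring,
    show (a+2)-1 = (a-1) + ((2:ℕ):ℤ) by push_cast; ring,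
    show 3*(a+1)-1 = (3*a-1) + ((3:ℕ):ℤ) by push_cast; ring,
    show (a+1)-1 = (a-1) + ((1:ℕ):ℤ) by push_cast; ring,
    texp, texp, texp, texp,
    show (3:ℤ) = ((3:ℕ):ℤ) by norm_num, show (4:ℤ) = ((4:ℕ):ℤ) by norm_num,
    show (1:ℤ) = ((1:ℕ):ℤ) by norm_num, tlit, tlit, tlit] <;> ring

private lemma q0_zero : q0 0 = 1 + T 2 := by simp [q0, T_zero]
private lemma q0_one : q0 1 = 0 := by norm_num [q0, Int.even_add_one]
private lemma q1_zero : q1 0 = 0 := by norm_num [q1]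
private lemma q1_one : q1 1 = 1 + T 2 := by norm_num [q1, T_zero, add_comm]

private lemma jones_one_var (y : ℤ → LaurentPolynomial ℤ)
    (hy : ∀ e : ℤ, y (e + 2) = (T 3 - T 1) * y (e + 1) + T 4 * y e) (a : ℤ) :
    (1 + T 2) * y a = q0 a * y 0 + q1 a * y 1 := by
  have key : ∀ b : ℤ, ((1 + T 2) * y b = q0 b * y 0 + q1 b * y 1) ∧
      ((1 + T 2) * y (b + 1) = q0 (b + 1) * y 0 + q1 (b + 1) * y 1) := by
    intro b
    induction b using Int.induction_on with
    | zero =>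
      constructor
      · rw [q0_zero, q1_zero]; ring
      · rw [zero_add, q0_one, q1_one]; ring
    | succ i ih =>
      obtain ⟨h1, h2⟩ := ih
      refine ⟨h2, ?_⟩
      rw [show ((i:ℤ) + 1 + 1) = (i:ℤ) + 2 by ring, hy, q0_rec, q1_rec]
      linear_combination (T 3 - T 1) * h2 + T 4 * h1
    | pred i ih =>
      obtain ⟨h1, h2⟩ := ih
      refine ⟨?_, by rwa [show (-(i:ℤ) - 1 + 1) = -(i:ℤ) by ring]⟩
      have h4 : (T 4 : LaurentPolynomial ℤ) ≠ 0 := (isUnit_T 4).ne_zero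
      apply mul_left_cancel₀ h4
      have hrec := hy (-(i:ℤ) - 1)
      rw [show (-(i:ℤ) - 1 + 2) = -(i:ℤ) + 1 by ring,
        show (-(i:ℤ) - 1 + 1) = -(i:ℤ) by ring] at hrec
      have hq0 := q0_rec (-(i:ℤ) - 1)
      have hq1 := q1_rec (-(i:ℤ) - 1)
      rw [show (-(i:ℤ) - 1 + 2) = -(i:ℤ) + 1 by ring,
        show (-(i:ℤ) - 1 + 1) = -(i:ℤ) by ring] at hq0 hq1
      linear_combination (-(1 + T 2)) * hrec + h2 - (T 3 - T 1) * h1 + y 0 * hq0 + y 1 * hq1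
  exact (key a).1

private lemma cast_cons {k : ℕ} (j : Fin 2) (J : Fin k → Fin 2) :
    (fun i : Fin (k+1) => (((Fin.cons (α := fun _ => Fin 2) j J) i : ℕ) : ℤ)) =
      Fin.cons ((j : ℕ) : ℤ) (fun i => ((J i : ℕ) : ℤ)) := by
  funext i
  refine Fin.cases ?_ ?_ i <;> simp

open LaurentPolynomial in
/-- **Theorem 1.2** (expansion formula for Jones polynomials, algebraic form).
If `x : (Fin k → ℤ) → ℤ[T,T⁻¹]` satisfies the Jones recurrence
`x(A[i ↦ e+2]) = (T³ − T)·x(A[i ↦ e+1]) + T⁴·x(A)` in each coordinate, then with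
`P₀(a) = T^{3a} + ε(a)T^{a+2}` and `P₁(a) = T^{3a−1} − ε(a)T^{a−1}` (`ε(a) = ±1`
according to the parity of `a`), for every `A : Fin k → ℤ`,
`(1 + T²)^k · x(A) = ∑_{J ∈ {0,1}^k} (∏ i, P_{J i}(A i)) · x(J)`. -/
theorem jones_expansion_formula (k : ℕ)
    (x : (Fin k → ℤ) → LaurentPolynomial ℤ)
    (hx : ∀ (i : Fin k) (A : Fin k → ℤ),
      x (Function.update A i (A i + 2)) =
        (T 3 - T 1) * x (Function.update A i (A i + 1)) + T 4 * x A)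
    (P : Fin 2 → ℤ → LaurentPolynomial ℤ)
    (hP0 : ∀ a : ℤ, P 0 a = T (3 * a) + (if Even a then 1 else -1) * T (a + 2))
    (hP1 : ∀ a : ℤ, P 1 a = T (3 * a - 1) + (if Even a then -1 else 1) * T (a - 1)) :
    ∀ A : Fin k → ℤ,
      (1 + T 2) ^ k * x A =
        ∑ J : Fin k → Fin 2,
          (∏ i, P (J i) (A i)) * x (fun i => ((J i : ℕ) : ℤ)) := by
  have hq0 : ∀ a : ℤ, P 0 a = q0 a := fun a => (hP0 a).trans rfl
  have hq1 : ∀ a : ℤ, P 1 a = q1 a := fun a => (hP1 a).trans rfl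
  clear hP0 hP1
  induction k with
  | zero =>
    intro A
    simp
    exact congrArg x (Subsingleton.elim _ _)
  | succ k ih =>
    intro A
    have hy : ∀ e : ℤ, x (Fin.cons (e + 2) (Fin.tail A)) =
        (T 3 - T 1) * x (Fin.cons (e + 1) (Fin.tail A)) + T 4 * x (Fin.cons e (Fin.tail A)) := by
      intro e
      have h := hx 0 (Fin.cons e (Fin.tail A))
      simpa [Fin.update_cons_zero, Fin.cons_zero] using h
    have step1 := jones_one_var (fun e => x (Fin.cons e (Fin.tail A))) hy (A 0)
    simp only [Fin.cons_self_tail] at step1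
    have hxe : ∀ e : ℤ, ∀ (i : Fin k) (B : Fin k → ℤ),
        x (Fin.cons e (Function.update B i (B i + 2))) =
          (T 3 - T 1) * x (Fin.cons e (Function.update B i (B i + 1))) + T 4 * x (Fin.cons e B) := by
      intro e i B
      have h := hx i.succ (Fin.cons e B)
      simpa [Fin.cons_succ, ← Fin.cons_update] using h
    have IH0 := ih (fun B => x (Fin.cons 0 B)) (fun i B => hxe 0 i B) (Fin.tail A)
    have IH1 := ih (fun B => x (Fin.cons 1 B)) (fun i B => hxe 1 i B) (Fin.tail A)
    rw [← Equiv.sum_comp (Fin.consEquiv (fun _ : Fin (k+1) => Fin 2)), Fintype.sum_prod_type]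
    simp only [Fin.consEquiv_apply]
    rw [Fin.sum_univ_two]
    simp only [cast_cons, Fin.prod_univ_succ, Fin.cons_zero, Fin.cons_succ,
      Fin.val_zero, Nat.cast_zero, Fin.val_one, Nat.cast_one]
    rw [pow_succ, mul_assoc, step1, mul_add, mul_left_comm, mul_left_comm ((1 + T 2) ^ k) (q1 (A 0)),
      IH0, IH1, Finset.mul_sum, Finset.mul_sum]
    congr 1 <;> refine Finset.sum_congr rfl fun J _ => ?_
    · rw [hq0]; simp only [show Fin.tail A = fun i => A i.succ from rfl]; ring
    · rw [hq1]; simp only [show Fin.tail A = fun i => A i.succ from rfl]; ring
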